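/- Let N ≥ 2 and M ≥ 3 be integers and let m' be an integer with 1 ≤ m' ≤ M - 2. Then (1/N^{m'+1} - 1/N^M) < (1 - log(m'+1)/log M) · (1/N - 1/N^M), where log is taken in any fixed base greater than 1. -/

import Mathlib

open Finset

private lemma aux_pow (j : ℕ) (hj : 7 ≤ j) : j * (j + 1) ≤ 2 ^ (j - 1) := by
  induction j, hj using Nat.le_induction with
  | base => norm_num
  | succ n hn ih =>
    have h2 : 2 ^ (n - 1) * 2 = 2 ^ (n + 1 - 1) := by
      rw [← pow_succ]; congr 1; omega
    calc (n + 1) * (n + 1 + 1) ≤ n * (n + 1) * 2 := by nlinarith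
      _ ≤ 2 ^ (n - 1) * 2 := Nat.mul_le_mul_right 2 ih
      _ = 2 ^ (n + 1 - 1) := h2

private lemma aux_log_pow {a b : ℕ} (p q : ℕ) (ha : 0 < a) (h : a ^ p < b ^ q) :
    (p : ℝ) * Real.log a < q * Real.log b := by
  have h1 : ((a : ℝ)) ^ p < ((b : ℝ)) ^ q := by exact_mod_cast h
  have h0 : (0 : ℝ) < (a : ℝ) ^ p := by positivity
  have := Real.log_lt_log h0 h1
  rwa [Real.log_pow, Real.log_pow] at this

private lemma lemA (j : ℕ) (hj : 2 ≤ j) :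
    Real.log j / 2 ^ (j - 1) < Real.log ((j : ℝ) + 1) - Real.log j := by
  rcases Nat.lt_or_ge j 7 with h7 | h7
  · interval_cases j
    · have h := aux_log_pow (a := 2) (b := 3) 3 2 (by norm_num) (by norm_num)
      norm_num at h ⊢; linarith
    · have h := aux_log_pow (a := 3) (b := 4) 5 4 (by norm_num) (by norm_num)
      norm_num at h ⊢; linarith
    · have h := aux_log_pow (a := 4) (b := 5) 9 8 (by norm_num) (by norm_num)
      norm_num at h ⊢; linarith
    · have h := aux_log_pow (a := 5) (b := 6) 17 16 (by norm_num) (by norm_num)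
      norm_num at h ⊢; linarith
    · have h := aux_log_pow (a := 6) (b := 7) 33 32 (by norm_num) (by norm_num)
      norm_num at h ⊢; linarith
  · have hj0 : (0 : ℝ) < j := by positivity
    have hj0' : (0 : ℝ) < (j : ℝ) + 1 := by positivity
    have hlog_lt : Real.log j < j := by
      have := Real.log_le_sub_one_of_pos hj0
      linarith
    have hpow : ((j : ℝ)) * ((j : ℝ) + 1) ≤ 2 ^ (j - 1) := by
      have := aux_pow j h7
      calc ((j : ℝ)) * ((j : ℝ) + 1) = ((j * (j + 1) : ℕ) : ℝ) := by push_cast; ring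
        _ ≤ ((2 ^ (j - 1) : ℕ) : ℝ) := by exact_mod_cast this
        _ = 2 ^ (j - 1) := by push_cast; ring
    have hP : (0 : ℝ) < 2 ^ (j - 1) := by positivity
    have h1 : Real.log j / 2 ^ (j - 1) < 1 / ((j : ℝ) + 1) := by
      rw [div_lt_div_iff₀ hP hj0']
      nlinarith
    have h2 : 1 / ((j : ℝ) + 1) ≤ Real.log ((j : ℝ) + 1) - Real.log j := by
      have hx : (0 : ℝ) < (j : ℝ) / ((j : ℝ) + 1) := by positivity
      have hle := Real.log_le_sub_one_of_pos hx
      rw [Real.log_div (ne_of_gt hj0) (ne_of_gt hj0')] at hle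
      have heq : (j : ℝ) / ((j : ℝ) + 1) - 1 = -(1 / ((j : ℝ) + 1)) := by
        field_simp
        ring
      rw [heq] at hle
      linarith
    linarith

private lemma lemStep (x : ℝ) (hx0 : 0 < x) (hx2 : x ≤ 1 / 2) (a : ℕ) (ha : 1 ≤ a) :
    Real.log ((a : ℝ) + 1) * (∑ i ∈ range (a + 1), x ^ i) <
      Real.log ((a : ℝ) + 2) * (∑ i ∈ range a, x ^ i) := by
  have hS1 : (1 : ℝ) ≤ ∑ i ∈ range a, x ^ i := by
    have h0 : x ^ (0 : ℕ) ≤ ∑ i ∈ range a, x ^ i :=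
      Finset.single_le_sum (f := fun i => x ^ i) (fun i _ => by positivity)
        (Finset.mem_range.mpr (by omega))
    simpa using h0
  have hxa : x ^ a ≤ ((2 : ℝ) ^ a)⁻¹ := by
    have := pow_le_pow_left₀ hx0.le hx2 a
    rwa [div_pow, one_pow, one_div] at this
  have hA := lemA (a + 1) (by omega)
  rw [Nat.add_sub_cancel] at hA
  push_cast at hA
  have hA' : Real.log ((a : ℝ) + 1) / 2 ^ a <
      Real.log ((a : ℝ) + 2) - Real.log ((a : ℝ) + 1) := by
    have : (a : ℝ) + 1 + 1 = (a : ℝ) + 2 := by ring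
    rwa [this] at hA
  have hlog1 : 0 ≤ Real.log ((a : ℝ) + 1) := by
    apply Real.log_nonneg
    have : (1 : ℝ) ≤ (a : ℝ) := by exact_mod_cast ha
    linarith
  have hdiff : 0 < Real.log ((a : ℝ) + 2) - Real.log ((a : ℝ) + 1) := by
    have : 0 ≤ Real.log ((a : ℝ) + 1) / 2 ^ a := by positivity
    linarith
  rw [Finset.sum_range_succ]
  have key1 : Real.log ((a : ℝ) + 1) * x ^ a ≤ Real.log ((a : ℝ) + 1) / 2 ^ a := by
    rw [div_eq_mul_inv]
    exact mul_le_mul_of_nonneg_left hxa hlog1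
  have key2 : Real.log ((a : ℝ) + 1) / 2 ^ a <
      (Real.log ((a : ℝ) + 2) - Real.log ((a : ℝ) + 1)) * (∑ i ∈ range a, x ^ i) := by
    calc Real.log ((a : ℝ) + 1) / 2 ^ a
        < Real.log ((a : ℝ) + 2) - Real.log ((a : ℝ) + 1) := hA'
      _ ≤ (Real.log ((a : ℝ) + 2) - Real.log ((a : ℝ) + 1)) * (∑ i ∈ range a, x ^ i) :=
          le_mul_of_one_le_right hdiff.le hS1
  nlinarith [key1, key2]

private lemma lemB (x : ℝ) (hx0 : 0 < x) (hx2 : x ≤ 1 / 2) (a c : ℕ) (ha : 1 ≤ a)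
    (hac : a < c) :
    Real.log ((a : ℝ) + 1) * (∑ i ∈ range c, x ^ i) <
      Real.log ((c : ℝ) + 1) * (∑ i ∈ range a, x ^ i) := by
  have hSpos : ∀ n : ℕ, 1 ≤ n → (0 : ℝ) < ∑ i ∈ range n, x ^ i := by
    intro n hn
    have h0 : x ^ (0 : ℕ) ≤ ∑ i ∈ range n, x ^ i :=
      Finset.single_le_sum (f := fun i => x ^ i) (fun i _ => by positivity)
        (Finset.mem_range.mpr (by omega))
    simp at h0; linarith
  induction c, hac using Nat.le_induction with
  | base =>
    have := lemStep x hx0 hx2 a ha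
    have hcast : ((a + 1 : ℕ) : ℝ) + 1 = (a : ℝ) + 2 := by push_cast; ring
    rwa [hcast]
  | succ c hc ih =>
    have hstep := lemStep x hx0 hx2 c (by omega)
    have hSa := hSpos a ha
    have hSc := hSpos c (by omega)
    have hSc1 := hSpos (c + 1) (by omega)
    have hcast : ((c + 1 : ℕ) : ℝ) + 1 = (c : ℝ) + 2 := by push_cast; ring
    rw [hcast, ← div_lt_div_iff₀ hSa hSc1]
    calc Real.log ((a : ℝ) + 1) / ∑ i ∈ range a, x ^ i
        < Real.log ((c : ℝ) + 1) / ∑ i ∈ range c, x ^ i := by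
          rw [div_lt_div_iff₀ hSa hSc]; linarith [ih]
      _ < Real.log ((c : ℝ) + 2) / ∑ i ∈ range (c + 1), x ^ i := by
          rw [div_lt_div_iff₀ hSc hSc1]; linarith [hstep]

theorem stmt_15 (N M m' : ℕ) (hN : 2 ≤ N) (hM : 3 ≤ M) (hm : 1 ≤ m')
    (hmM : m' ≤ M - 2) (b : ℝ) (hb : 1 < b) :
    1 / (N : ℝ) ^ (m' + 1) - 1 / (N : ℝ) ^ M <
      (1 - Real.logb b ((m' : ℝ) + 1) / Real.logb b M) *
        (1 / (N : ℝ) - 1 / (N : ℝ) ^ M) := by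
  obtain ⟨c, rfl⟩ : ∃ c, M = c + 1 := ⟨M - 1, by omega⟩
  have hc2 : 2 ≤ c := by omega
  have hN2 : (2 : ℝ) ≤ (N : ℝ) := by exact_mod_cast hN
  have hN0 : (0 : ℝ) < (N : ℝ) := by linarith
  set x : ℝ := (N : ℝ)⁻¹ with hxdef
  have hx0 : 0 < x := by positivity
  have hx2 : x ≤ 1 / 2 := by
    rw [hxdef]
    rw [inv_le_comm₀ (by linarith) (by norm_num)]
    norm_num; linarith
  have hkey := lemB x hx0 hx2 m' c hm (by omega)
  set Sa : ℝ := ∑ i ∈ range m', x ^ i with hSa_def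
  set Sc : ℝ := ∑ i ∈ range c, x ^ i with hSc_def
  have hSa1 : (1 : ℝ) ≤ Sa := by
    have h0 : x ^ (0 : ℕ) ≤ ∑ i ∈ range m', x ^ i :=
      Finset.single_le_sum (f := fun i => x ^ i) (fun i _ => by positivity)
        (Finset.mem_range.mpr (by omega))
    simpa [hSa_def] using h0
  have hgeom : ∀ n : ℕ, (1 - x) * ∑ i ∈ range n, x ^ i = 1 - x ^ n := by
    intro n
    have h := geom_sum_mul x n
    linear_combination -h
  have g1 := hgeom c
  have g2 := hgeom m'
  rw [← hSc_def] at g1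
  rw [← hSa_def] at g2
  have e1 : 1 / (N : ℝ) ^ (m' + 1) = x ^ (m' + 1) := by
    rw [hxdef, inv_pow, one_div]
  have e2 : 1 / (N : ℝ) ^ (c + 1) = x ^ (c + 1) := by
    rw [hxdef, inv_pow, one_div]
  have e3 : 1 / (N : ℝ) = x := by rw [hxdef, one_div]
  rw [e1, e2, e3]
  have hlogM : 0 < Real.log ((c : ℝ) + 1) := by
    apply Real.log_pos
    have : (2 : ℝ) ≤ (c : ℝ) := by exact_mod_cast hc2
    linarith
  have hbpos : Real.log b ≠ 0 := ne_of_gt (Real.log_pos hb)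
  have hrat : Real.logb b ((m' : ℝ) + 1) / Real.logb b ((c + 1 : ℕ) : ℝ) =
      Real.log ((m' : ℝ) + 1) / Real.log ((c : ℝ) + 1) := by
    push_cast
    rw [Real.logb, Real.logb, div_div_div_cancel_right₀ hbpos]
  rw [hrat]
  set L1 : ℝ := Real.log ((m' : ℝ) + 1) with hL1
  set LM : ℝ := Real.log ((c : ℝ) + 1) with hLM
  have h1 : x ^ (m' + 1) - x ^ (c + 1) = x * ((1 - x) * (Sc - Sa)) := by
    linear_combination x * g2 - x * g1
  have h2 : x - x ^ (c + 1) = x * ((1 - x) * Sc) := by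
    linear_combination -x * g1
  rw [h1, h2]
  have hx1 : 0 < 1 - x := by linarith
  have hmain : Sc - Sa < (1 - L1 / LM) * Sc := by
    have hr : L1 / LM * Sc < Sa := by
      rw [div_mul_eq_mul_div, div_lt_iff₀ hlogM]
      linarith [hkey]
    rw [one_sub_mul]
    linarith
  calc x * ((1 - x) * (Sc - Sa)) < x * ((1 - x) * ((1 - L1 / LM) * Sc)) := by
        apply mul_lt_mul_of_pos_left (mul_lt_mul_of_pos_left hmain hx1) hx0
    _ = (1 - L1 / LM) * (x * ((1 - x) * Sc)) := by ring
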